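/- In the setting of the rank-zero algebra 𝔤 = 𝔯_𝒱 of the previous statement (dim V = 2p, p ≥ 2, generic flag with odd-dimensional steps), with H = Σ_{i=1}^{p} H_i, one has [H, W_l] = 2W_l for each 1 ≤ l ≤ p−1; consequently [𝔤, 𝔤(g)] ∩ 𝔤(g) ≠ {0}, so g is not a stable linear form. -/

import Mathlib

open Module LinearMap

namespace Paper

attribute [local instance 100] LieRing.ofAssociativeRing

variable (K : Type*) [Field K] [IsAlgClosed K] [CharZero K]

/-- Elementary matrix `E_{a,b}` (with `ℕ` indices; zero if out of range). -/
def Eij (N a b : ℕ) : Matrix (Fin N) (Fin N) K :=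
  Matrix.of fun i k => if (i : ℕ) = a ∧ (k : ℕ) = b then 1 else 0

variable (p : ℕ)

/-- `H_j = E_{2j-1,2j-1} − E_{2j,2j}` (0-indexed). -/
def Hgen (N j : ℕ) : Matrix (Fin N) (Fin N) K :=
  Eij K N (2 * j) (2 * j) - Eij K N (2 * j + 1) (2 * j + 1)

/-- `Z_j = 2E_{2j-1,2j}` (0-indexed). -/
def Zgen (N j : ℕ) : Matrix (Fin N) (Fin N) K :=
  (2 : K) • Eij K N (2 * j) (2 * j + 1)

/-- `T_j = E_{2j-1,2j+2} + E_{2j+1,2j}` (0-indexed). -/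
def Tgen (N j : ℕ) : Matrix (Fin N) (Fin N) K :=
  Eij K N (2 * j) (2 * j + 3) + Eij K N (2 * j + 2) (2 * j + 1)

/-- The Lie algebra `𝔤 = 𝔯_𝒱 = 𝔩 ⊕ 𝔫`, spanned by the `H_j, Z_j (j < p)` and the
`T_j (j < p−1)`, inside `𝔤𝔩(2p, K)`. -/
def rEven : Submodule K (Matrix (Fin (2 * p)) (Fin (2 * p)) K) :=
  Submodule.span K
    ({M | ∃ j < p, M = Hgen K (2 * p) j} ∪ {M | ∃ j < p, M = Zgen K (2 * p) j} ∪
      {M | ∃ j < p - 1, M = Tgen K (2 * p) j})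

/-- `W_i = T_i − (τ_i/2)(Z_i/ζ_i + Z_{i+1}/ζ_{i+1})`. -/
def Wgen (N : ℕ) (ζ τ : ℕ → K) (i : ℕ) : Matrix (Fin N) (Fin N) K :=
  Tgen K N i - (τ i / (2 * ζ i)) • Zgen K N i - (τ i / (2 * ζ (i + 1))) • Zgen K N (i + 1)

section
variable {K : Type*} [Field K] {M : Type*} [LieRing M] [LieAlgebra K M]

/-- The stabilizer, inside a subalgebra `𝔞` (given as a submodule), of the restriction
of a linear form `g`. -/
def stabIn (𝔞 : Submodule K M) (g : Module.Dual K M) : Submodule K M where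
  carrier := {X | X ∈ 𝔞 ∧ ∀ Y ∈ 𝔞, g ⁅X, Y⁆ = 0}
  add_mem' := by
    rintro a b ⟨ha, ha'⟩ ⟨hb, hb'⟩
    exact ⟨𝔞.add_mem ha hb, fun Y hY => by
      rw [add_lie, map_add, ha' Y hY, hb' Y hY, add_zero]⟩
  zero_mem' := ⟨𝔞.zero_mem, fun Y _ => by rw [zero_lie, map_zero]⟩
  smul_mem' := by
    rintro c a ⟨ha, ha'⟩
    exact ⟨𝔞.smul_mem c ha, fun Y hY => by
      rw [smul_lie, map_smul, ha' Y hY, smul_zero]⟩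

end

/-! ### Auxiliary bracket computations -/

lemma Eij_mul (N a b c d : ℕ) :
    Eij K N a b * Eij K N c d = if b = c ∧ b < N then Eij K N a d else 0 := by
  ext i k
  simp only [Matrix.mul_apply, Eij, Matrix.of_apply]
  rcases Nat.lt_or_ge b N with hb | hb
  · rw [Finset.sum_eq_single (⟨b, hb⟩ : Fin N)]
    · by_cases hbc : b = c
      · subst hbc
        simp only [hb, and_true, if_pos rfl, Matrix.of_apply]
        by_cases hia : (i:ℕ) = a <;> by_cases hkd : (k:ℕ) = d <;>
          simp [hia, hkd]
      · have h1 : ¬(b = c ∧ b < N) := fun h => hbc h.1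
        have h2 : ¬((b:ℕ) = c ∧ (k:ℕ) = d) := fun h => hbc h.1
        simp [h1, h2]
    · intro j _ hj
      have : (j : ℕ) ≠ b := fun h => hj (Fin.ext h)
      simp [this]
    · simp
  · rw [Finset.sum_eq_zero]
    · have : ¬(b = c ∧ b < N) := by omega
      simp [this]
    · intro j _
      have : (j:ℕ) ≠ b := by omega
      simp [this]

lemma lie_HZ (p j l : ℕ) (hj : j < p) (hl : l < p) :
    ⁅Hgen K (2*p) j, Zgen K (2*p) l⁆ =
      if j = l then (2:K) • Zgen K (2*p) l else 0 := by
  rcases eq_or_ne j l with rfl | hjl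
  · have c1 : 2*j < 2*p := by omega
    have c2 : 2*j+1 < 2*p := by omega
    have c3 : 2*j+1 ≠ 2*j := by omega
    simp only [Hgen, Zgen, Ring.lie_def, sub_mul, Matrix.mul_smul,
      Matrix.smul_mul, mul_sub, Eij_mul, c1, c2, c3, eq_self_iff_true,
      and_self, and_true, true_and, and_false, false_and, if_true, if_false]
    module
  · have c1 : 2*j ≠ 2*l := by omega
    have c2 : 2*j+1 ≠ 2*l := by omega
    have c3 : 2*l+1 ≠ 2*j := by omega
    have c4 : 2*l+1 ≠ 2*j+1 := by omega
    simp only [Hgen, Zgen, Ring.lie_def, sub_mul, Matrix.mul_smul,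
      Matrix.smul_mul, mul_sub, Eij_mul, c1, c2, c3, c4, hjl,
      and_true, true_and, and_false, false_and, if_true, if_false]
    module

lemma lie_HT (p j l : ℕ) (hj : j < p) (hl : l < p - 1) :
    ⁅Hgen K (2*p) j, Tgen K (2*p) l⁆ =
      (if j = l then Tgen K (2*p) l else 0) +
      (if j = l + 1 then Tgen K (2*p) l else 0) := by
  rcases eq_or_ne j l with rfl | hjl
  · have c1 : 2*j < 2*p := by omega
    have c2 : 2*j+1 < 2*p := by omega
    have c3 : 2*j ≠ 2*j+2 := by omega
    have c4 : 2*j+1 ≠ 2*j := by omega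
    have c5 : 2*j+1 ≠ 2*j+2 := by omega
    have c6 : 2*j+3 ≠ 2*j := by omega
    have c7 : 2*j+3 ≠ 2*j+1 := by omega
    have c8 : j ≠ j+1 := by omega
    simp only [Hgen, Tgen, Ring.lie_def, sub_mul, mul_sub, add_mul, mul_add,
      Eij_mul, c1, c2, c3, c4, c5, c6, c7, c8, eq_self_iff_true, and_self,
      and_true, true_and, and_false, false_and, if_true, if_false]
    module
  · rcases eq_or_ne j (l+1) with rfl | hjl1
    · have e : 2*(l+1) = 2*l+2 := by ring
      have c1 : 2*l+2 < 2*p := by omega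
      have c2 : 2*l+3 < 2*p := by omega
      have c3 : 2*l+2 ≠ 2*l := by omega
      have c4 : 2*l+3 ≠ 2*l := by omega
      have c5 : 2*l+1 ≠ 2*l+2 := by omega
      have c6 : 2*l+1 ≠ 2*l+3 := by omega
      have c7 : 2*l+3 ≠ 2*l+2 := by omega
      simp only [Hgen, Tgen, Ring.lie_def, sub_mul, mul_sub, add_mul, mul_add,
        Eij_mul, e, c1, c2, c3, c4, c5, c6, c7, hjl, eq_self_iff_true, and_self,
        and_true, true_and, and_false, false_and, if_true, if_false]
      module
    · have c1 : 2*j ≠ 2*l := by omega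
      have c2 : 2*j ≠ 2*l+2 := by omega
      have c3 : 2*j+1 ≠ 2*l := by omega
      have c4 : 2*j+1 ≠ 2*l+2 := by omega
      have c5 : 2*l+3 ≠ 2*j := by omega
      have c6 : 2*l+3 ≠ 2*j+1 := by omega
      have c7 : 2*l+1 ≠ 2*j := by omega
      have c8 : 2*l+1 ≠ 2*j+1 := by omega
      simp only [Hgen, Tgen, Ring.lie_def, sub_mul, mul_sub, add_mul, mul_add,
        Eij_mul, c1, c2, c3, c4, c5, c6, c7, c8, hjl, hjl1,
        and_true, true_and, and_false, false_and, if_true, if_false]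
      module

lemma lie_ZZ (p j l : ℕ) : ⁅Zgen K (2*p) j, Zgen K (2*p) l⁆ = 0 := by
  have c1 : 2*j+1 ≠ 2*l := by omega
  have c2 : 2*l+1 ≠ 2*j := by omega
  simp only [Zgen, Ring.lie_def, Matrix.smul_mul, Matrix.mul_smul, Eij_mul,
    c1, c2, and_true, true_and, and_false, false_and, if_true, if_false]
  module

lemma lie_TZ (p j l : ℕ) : ⁅Tgen K (2*p) j, Zgen K (2*p) l⁆ = 0 := by
  have c1 : 2*j+3 ≠ 2*l := by omega
  have c2 : 2*j+1 ≠ 2*l := by omega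
  have c3 : 2*l+1 ≠ 2*j := by omega
  have c4 : 2*l+1 ≠ 2*j+2 := by omega
  simp only [Tgen, Zgen, Ring.lie_def, Matrix.smul_mul, Matrix.mul_smul,
    add_mul, mul_add, Eij_mul, c1, c2, c3, c4,
    and_true, true_and, and_false, false_and, if_true, if_false]
  module

lemma lie_ZT (p j l : ℕ) : ⁅Zgen K (2*p) j, Tgen K (2*p) l⁆ = 0 := by
  rw [← lie_skew, lie_TZ, neg_zero]

lemma lie_TT (p j l : ℕ) : ⁅Tgen K (2*p) j, Tgen K (2*p) l⁆ = 0 := by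
  have c1 : 2*j+3 ≠ 2*l := by omega
  have c2 : 2*j+3 ≠ 2*l+2 := by omega
  have c3 : 2*j+1 ≠ 2*l := by omega
  have c4 : 2*j+1 ≠ 2*l+2 := by omega
  have c5 : 2*l+3 ≠ 2*j := by omega
  have c6 : 2*l+3 ≠ 2*j+2 := by omega
  have c7 : 2*l+1 ≠ 2*j := by omega
  have c8 : 2*l+1 ≠ 2*j+2 := by omega
  simp only [Tgen, Ring.lie_def, add_mul, mul_add, Eij_mul,
    c1, c2, c3, c4, c5, c6, c7, c8,
    and_true, true_and, and_false, false_and, if_true, if_false]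
  module

lemma lie_smulr (N : ℕ) (c : K) (A B : Matrix (Fin N) (Fin N) K) :
    ⁅A, c • B⁆ = c • ⁅A, B⁆ := by
  simp [Ring.lie_def, Matrix.mul_smul, Matrix.smul_mul, smul_sub]

lemma smull_lie (N : ℕ) (c : K) (A B : Matrix (Fin N) (Fin N) K) :
    ⁅c • A, B⁆ = c • ⁅A, B⁆ := by
  simp [Ring.lie_def, Matrix.mul_smul, Matrix.smul_mul, smul_sub]

lemma lie_sumH_W (p l : ℕ) (ζ τ : ℕ → K) (hl : l < p - 1) :
    ⁅∑ i ∈ Finset.range p, Hgen K (2*p) i, Wgen K (2*p) ζ τ l⁆ =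
      (2:K) • Wgen K (2*p) ζ τ l := by
  have hsum : ⁅∑ i ∈ Finset.range p, Hgen K (2*p) i, Wgen K (2*p) ζ τ l⁆
      = ∑ i ∈ Finset.range p, ⁅Hgen K (2*p) i, Wgen K (2*p) ζ τ l⁆ := by
    simp [Ring.lie_def, Finset.sum_mul, Finset.mul_sum, Finset.sum_sub_distrib]
  rw [hsum]
  have step : ∀ i ∈ Finset.range p, ⁅Hgen K (2*p) i, Wgen K (2*p) ζ τ l⁆ =
      ((if i = l then Tgen K (2*p) l else 0)
        + (if i = l+1 then Tgen K (2*p) l else 0))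
      - (if i = l then (τ l/(2*ζ l)) • ((2:K) • Zgen K (2*p) l) else 0)
      - (if i = l+1 then (τ l/(2*ζ (l+1))) • ((2:K) • Zgen K (2*p) (l+1)) else 0) := by
    intro i hi
    have hi' : i < p := Finset.mem_range.mp hi
    rw [Wgen, lie_sub, lie_sub, lie_smulr, lie_smulr, lie_HT K p i l hi' hl,
      lie_HZ K p i l hi' (by omega), lie_HZ K p i (l+1) hi' (by omega)]
    rcases eq_or_ne i l with rfl | h
    · have h' : i ≠ i + 1 := by omega
      simp [h']
    · rcases eq_or_ne i (l+1) with rfl | h1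
      · simp [h]
      · simp [h, h1]
  rw [Finset.sum_congr rfl step]
  have hlp : l ∈ Finset.range p := Finset.mem_range.mpr (by omega)
  have hlp1 : l+1 ∈ Finset.range p := Finset.mem_range.mpr (by omega)
  simp only [Finset.sum_sub_distrib, Finset.sum_add_distrib,
    Finset.sum_ite_eq', hlp, hlp1, if_true]
  rw [Wgen]
  module

lemma W0_mem_stab (hp : 2 ≤ p)
    (g : Module.Dual K (Matrix (Fin (2 * p)) (Fin (2 * p)) K)) (ζ τ : ℕ → K)
    (hZ : ∀ j < p, g (Zgen K (2 * p) j) = ζ j) (hζ : ∀ j < p, ζ j ≠ 0)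
    (hT : ∀ j < p - 1, g (Tgen K (2 * p) j) = τ j) :
    Wgen K (2*p) ζ τ 0 ∈ stabIn (rEven K p) g := by
  have hTmem : Tgen K (2*p) 0 ∈ rEven K p :=
    Submodule.subset_span (Or.inr ⟨0, by omega, rfl⟩)
  have hZ0mem : Zgen K (2*p) 0 ∈ rEven K p :=
    Submodule.subset_span (Or.inl (Or.inr ⟨0, by omega, rfl⟩))
  have hZ1mem : Zgen K (2*p) 1 ∈ rEven K p :=
    Submodule.subset_span (Or.inl (Or.inr ⟨1, by omega, rfl⟩))
  constructor
  · rw [Wgen]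
    exact Submodule.sub_mem _
      (Submodule.sub_mem _ hTmem (Submodule.smul_mem _ _ hZ0mem))
      (Submodule.smul_mem _ _ hZ1mem)
  · intro Y hY
    induction hY using Submodule.span_induction with
    | mem x hx =>
        rcases hx with (⟨j, hj, rfl⟩ | ⟨j, hj, rfl⟩) | ⟨j, hj, rfl⟩
        · -- Y = H_j
          rw [← lie_skew, map_neg, neg_eq_zero,
            Wgen, lie_sub, lie_sub, lie_smulr, lie_smulr,
            lie_HT K p j 0 hj (by omega), lie_HZ K p j 0 hj (by omega),
            lie_HZ K p j 1 hj (by omega)]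
          rcases eq_or_ne j 0 with rfl | hj0
          · have h01 : (0:ℕ) ≠ 0 + 1 := by omega
            simp only [if_pos rfl, if_neg h01, add_zero, smul_zero, sub_zero,
              map_sub, map_smul, hT 0 (by omega), hZ 0 (by omega),
              smul_eq_mul, map_smul, map_zero]
            have := hζ 0 (by omega)
            field_simp
            simp only [if_true, map_smul, smul_eq_mul, hT 0 (by omega), hZ 0 (by omega)]
            ring
          · rcases eq_or_ne j 1 with rfl | hj1
            · have h01 : (1:ℕ) ≠ 0 := by omega
              have h01' : (1:ℕ) = 0 + 1 := by omega
              simp only [if_neg h01, if_pos h01', zero_add, smul_zero, sub_zero,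
                zero_sub, map_sub, map_neg, map_smul, hT 0 (by omega),
                hZ 1 (by omega), smul_eq_mul, map_zero, zero_sub]
              have := hζ 1 (by omega)
              field_simp
              simp only [if_true, map_smul, smul_eq_mul, hT 0 (by omega), hZ 1 (by omega)]
              ring
            · have h01 : j ≠ 0 + 1 := by omega
              simp [hj0, h01]
        · -- Y = Z_j
          rw [Wgen, sub_lie, sub_lie, smull_lie, smull_lie,
            lie_TZ, lie_ZZ, lie_ZZ]
          simp
        · -- Y = T_j
          rw [Wgen, sub_lie, sub_lie, smull_lie, smull_lie,
            lie_TT, lie_ZT, lie_ZT]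
          simp
    | zero => simp
    | add x y _ _ hx hy => rw [lie_add, map_add, hx, hy, add_zero]
    | smul a x _ hx => rw [lie_smul, map_smul, hx, smul_zero]

/-- with `H = Σ H_i` one has `[H, W_l] = 2W_l`, hence
`[𝔤, 𝔤(g)] ∩ 𝔤(g) ≠ 0` and `g` is not a stable linear form. -/
theorem not_stable_even_case (hp : 2 ≤ p)
    (g : Module.Dual K (Matrix (Fin (2 * p)) (Fin (2 * p)) K)) (ζ τ : ℕ → K)
    (hH : ∀ j < p, g (Hgen K (2 * p) j) = 0)
    (hZ : ∀ j < p, g (Zgen K (2 * p) j) = ζ j) (hζ : ∀ j < p, ζ j ≠ 0)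
    (hT : ∀ j < p - 1, g (Tgen K (2 * p) j) = τ j) :
    (∀ l < p - 1,
      ⁅∑ i ∈ Finset.range p, Hgen K (2 * p) i, Wgen K (2 * p) ζ τ l⁆ =
        (2 : K) • Wgen K (2 * p) ζ τ l) ∧
      Submodule.span K
          {M | ∃ X ∈ rEven K p, ∃ Y ∈ stabIn (rEven K p) g, M = ⁅X, Y⁆} ⊓
        stabIn (rEven K p) g ≠ ⊥ := by
  refine ⟨fun l hl => lie_sumH_W K p l ζ τ hl, fun hbot => ?_⟩
  have hst : Wgen K (2*p) ζ τ 0 ∈ stabIn (rEven K p) g :=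
    W0_mem_stab K p hp g ζ τ hZ hζ hT
  have hsum_mem : (∑ i ∈ Finset.range p, Hgen K (2*p) i) ∈ rEven K p :=
    Submodule.sum_mem _ fun i hi =>
      Submodule.subset_span (Or.inl (Or.inl ⟨i, Finset.mem_range.mp hi, rfl⟩))
  have hBmem : ((2:K) • Wgen K (2*p) ζ τ 0) ∈
      Submodule.span K
        {M | ∃ X ∈ rEven K p, ∃ Y ∈ stabIn (rEven K p) g, M = ⁅X, Y⁆} := by
    rw [← lie_sumH_W K p 0 ζ τ (by omega)]
    exact Submodule.subset_span ⟨_, hsum_mem, _, hst, rfl⟩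
  have hmem : ((2:K) • Wgen K (2*p) ζ τ 0) ∈
      (Submodule.span K
          {M | ∃ X ∈ rEven K p, ∃ Y ∈ stabIn (rEven K p) g, M = ⁅X, Y⁆} ⊓
        stabIn (rEven K p) g) :=
    Submodule.mem_inf.mpr ⟨hBmem, Submodule.smul_mem _ _ hst⟩
  rw [hbot, Submodule.mem_bot] at hmem
  have hentry : ((2:K) • Wgen K (2*p) ζ τ 0) ⟨0, by omega⟩ ⟨3, by omega⟩ = 2 := by
    simp only [Wgen, Tgen, Zgen, Eij, Matrix.smul_apply, Matrix.sub_apply,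
      Matrix.add_apply, Matrix.of_apply]
    norm_num
  rw [hmem] at hentry
  simp only [Matrix.zero_apply] at hentry
  exact two_ne_zero hentry.symm

end Paper
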